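/- Superinduction satisfies Frobenius reciprocity for superclass functions: if H ≤ G are finite groups, G has a supercharacter theory, φ: H → ℂ is any function, and ψ: G → ℂ is a superclass function on G, then ⟨SInd_H^G(φ), ψ⟩_G = ⟨φ, Res_H^G(ψ)⟩_H. -/

import Mathlib

open scoped BigOperators
open Finset Classical

/-- The Frobenius scalar product `⟨f,g⟩ = (1/|X|) Σ_{x} conj(f(x)) g(x)`. -/
noncomputable def frobC (X : Type*) [Fintype X] (f g : X → ℂ) : ℂ :=
  (Fintype.card X : ℂ)⁻¹ * ∑ x : X, (starRingEnd ℂ) (f x) * g x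

/-- Extension by zero of `φ : H → ℂ` to `G`. -/
noncomputable def extZero {G : Type*} [Group G] (H : Subgroup G) (φ : H → ℂ) : G → ℂ :=
  fun g => if h : g ∈ H then φ ⟨g, h⟩ else 0

/-- Superinduction: `SInd_H^G(φ)(g) = (|G|/(|H|·|[g]|)) Σ_{k∈[g]} φ⁰(k)`, where `[g]`
is the superclass of `g`, given by the map `cls`. -/
noncomputable def SInd {G : Type*} [Group G] [Fintype G] (H : Subgroup G)
    (cls : G → Finset G) (φ : H → ℂ) : G → ℂ :=
  fun g => ((Fintype.card G : ℂ) / ((Nat.card H : ℂ) * ((cls g).card : ℂ))) *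
    ∑ k ∈ cls g, extZero H φ k

/-- Frobenius reciprocity for superinduction: if `ψ` is a superclass
function on `G` and `φ : H → ℂ` is any function, then
`⟨SInd_H^G(φ), ψ⟩_G = ⟨φ, Res_H^G(ψ)⟩_H`. -/
theorem stmt3 (G : Type*) [Group G] [Fintype G] (H : Subgroup G)
    (cls : G → Finset G)
    -- `cls` assigns to each element its superclass; the superclasses partition `G`
    (hmem : ∀ g : G, g ∈ cls g)
    (hcls : ∀ g h : G, h ∈ cls g → cls h = cls g)
    (φ : H → ℂ) (ψ : G → ℂ)
    -- `ψ` is a superclass function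
    (hψ : ∀ g h : G, h ∈ cls g → ψ h = ψ g) :
    frobC G (SInd H cls φ) ψ = frobC H φ (fun x : H => ψ (x : G)) := by
  classical
  have hGcard : (Fintype.card G : ℂ) ≠ 0 := by
    exact_mod_cast (Fintype.card_ne_zero (α := G))
  have hHpos : 0 < Nat.card H := Nat.card_pos
  have hHcard : (Nat.card H : ℂ) ≠ 0 := by exact_mod_cast hHpos.ne'
  set F : G → ℂ := fun g => (starRingEnd ℂ) (extZero H φ g) * ψ g with hF
  have hclsne : ∀ g : G, ((cls g).card : ℂ) ≠ 0 := by
    intro g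
    have : 0 < (cls g).card := Finset.card_pos.mpr ⟨g, hmem g⟩
    exact_mod_cast this.ne'
  -- Step 1: rewrite each summand
  have hterm : ∀ g : G, (starRingEnd ℂ) (SInd H cls φ g) * ψ g
      = ((Fintype.card G : ℂ) / (Nat.card H : ℂ)) *
        (((cls g).card : ℂ)⁻¹ * ∑ k ∈ cls g, F k) := by
    intro g
    have hsum : ∑ k ∈ cls g, F k
        = (∑ k ∈ cls g, (starRingEnd ℂ) (extZero H φ k)) * ψ g := by
      rw [Finset.sum_mul]
      exact Finset.sum_congr rfl fun k hk => by rw [hF]; simp [hψ g k hk]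
    simp only [SInd, map_mul, map_sum, map_div₀, map_natCast]
    rw [mul_assoc, ← hsum]
    field_simp
  have hswap : ∑ g : G, (((cls g).card : ℂ)⁻¹ * ∑ k ∈ cls g, F k)
      = ∑ g : G, F g := by
    have h1 : ∀ g : G, ((cls g).card : ℂ)⁻¹ * ∑ k ∈ cls g, F k
        = ∑ k ∈ cls g, ((cls g).card : ℂ)⁻¹ * F k := fun g => Finset.mul_sum _ _ _
    calc ∑ g : G, (((cls g).card : ℂ)⁻¹ * ∑ k ∈ cls g, F k)
        = ∑ g : G, ∑ k ∈ cls g, ((cls g).card : ℂ)⁻¹ * F k := by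
          exact Finset.sum_congr rfl fun g _ => h1 g
      _ = ∑ k : G, ∑ g ∈ cls k, ((cls g).card : ℂ)⁻¹ * F k := by
          refine Finset.sum_comm' ?_
          intro g k
          simp only [Finset.mem_univ, true_and, and_true]
          constructor
          · intro hk
            have := hcls g k hk
            rw [this]; exact hmem g
          · intro hg
            have := hcls k g hg
            rw [this]; exact hmem k
      _ = ∑ k : G, F k := by
          refine Finset.sum_congr rfl fun k _ => ?_
          have : ∀ g ∈ cls k, ((cls g).card : ℂ)⁻¹ * F k
              = ((cls k).card : ℂ)⁻¹ * F k := by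
            intro g hg; rw [hcls k g hg]
          rw [Finset.sum_congr rfl this, Finset.sum_const, nsmul_eq_mul]
          field_simp
          exact mul_div_cancel_left₀ _ (hclsne k)
  have hsumH : ∑ g : G, F g = ∑ h : H, (starRingEnd ℂ) (φ h) * ψ (h : G) := by
    have h0 : ∑ g : G, F g = ∑ g ∈ Finset.univ.filter (· ∈ H), F g := by
      refine (Finset.sum_filter_of_ne ?_).symm
      intro g _ hne
      by_contra hgH
      apply hne
      rw [hF]; simp [extZero, hgH]
    rw [h0]
    rw [Finset.sum_subtype (p := (· ∈ H)) _ (by simp) F]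
    refine Finset.sum_congr rfl fun h _ => ?_
    rw [hF]
    simp [extZero, h.2]
  have hHfin : (Nat.card H : ℂ) = (Fintype.card H : ℂ) := by
    exact_mod_cast congrArg (Nat.cast : ℕ → ℂ) Nat.card_eq_fintype_card
  simp only [frobC]
  rw [Finset.sum_congr rfl fun g _ => hterm g, ← Finset.mul_sum, hswap, hsumH]
  rw [← hHfin]
  field_simp
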